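/- arXiv:1704.04978 — 8 statements merged into one kernel-verified Lean document; each statement's English description precedes it below -/
import Mathlib

section
/- Let τ : I → ℝ be continuous on an open interval I and let v, w : I → ℝ be differentiable functions satisfying v' + τ·w = 0, w' + τ·v = 0, and v(s)² - w(s)² = 1 for all s ∈ I. Then there exists a constant c such that either v(s) = cosh(∫τ ds + c) and w(s) = -sinh(∫τ ds + c) for all s, or v(s) = -cosh(∫τ ds + c) and w(s) = sinh(∫τ ds + c) for all s. -/
/-- ODE system (12): evolute-direction curves, spacelike type 1 donor, timelike X. -/
theorem stmt_1 (I : Set ℝ) (hI : IsOpen I) (hI' : I.OrdConnected)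
    (τ v w F : ℝ → ℝ)
    (hτ : ContinuousOn τ I)
    (hF : ∀ s ∈ I, HasDerivAt F (τ s) s)
    (hv : ∀ s ∈ I, HasDerivAt v (-(τ s * w s)) s)
    (hw : ∀ s ∈ I, HasDerivAt w (-(τ s * v s)) s)
    (hnorm : ∀ s ∈ I, v s ^ 2 - w s ^ 2 = 1) :
    ∃ c : ℝ,
      (∀ s ∈ I, v s = Real.cosh (F s + c) ∧ w s = -Real.sinh (F s + c)) ∨
      (∀ s ∈ I, v s = -Real.cosh (F s + c) ∧ w s = Real.sinh (F s + c)) := by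
  by_cases hne : I.Nonempty
  swap
  · exact ⟨0, Or.inl fun s hs => (hne ⟨s, hs⟩).elim⟩
  obtain ⟨x0, hx0⟩ := hne
  set a : ℝ → ℝ := fun s => v s * Real.cosh (F s) + w s * Real.sinh (F s) with ha_def
  set b : ℝ → ℝ := fun s => v s * Real.sinh (F s) + w s * Real.cosh (F s) with hb_def
  have hconv : Convex ℝ I := hI'.convex
  have hda : ∀ s ∈ I, HasDerivAt a 0 s := by
    intro s hs
    have h := ((hv s hs).mul ((hF s hs).cosh)).add ((hw s hs).mul ((hF s hs).sinh))
    exact h.congr_deriv (by ring)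
  have hdb : ∀ s ∈ I, HasDerivAt b 0 s := by
    intro s hs
    have h := ((hv s hs).mul ((hF s hs).sinh)).add ((hw s hs).mul ((hF s hs).cosh))
    exact h.congr_deriv (by ring)
  have hconst : ∀ (f : ℝ → ℝ), (∀ s ∈ I, HasDerivAt f 0 s) → ∀ s ∈ I, f s = f x0 := by
    intro f hf s hs
    refine hconv.is_const_of_fderivWithin_eq_zero (fun x hx => ((hf x hx).differentiableAt).differentiableWithinAt) (fun x hx => ?_) hs hx0
    rw [fderivWithin_of_isOpen hI hx]
    have := (hf x hx).hasFDerivAt.fderiv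
    rw [this]; ext; simp
  have hA : ∀ s ∈ I, a s = a x0 := hconst a hda
  have hB : ∀ s ∈ I, b s = b x0 := hconst b hdb
  set A := a x0 with hAd
  set B := b x0 with hBd
  have hAB : A ^ 2 - B ^ 2 = 1 := by
    have h1 := Real.cosh_sq_sub_sinh_sq (F x0)
    have h2 := hnorm x0 hx0
    simp only [hAd, hBd, ha_def, hb_def]
    nlinarith [h1, h2]
  have hv' : ∀ s ∈ I, v s = A * Real.cosh (F s) - B * Real.sinh (F s) := by
    intro s hs
    have h1 := Real.cosh_sq_sub_sinh_sq (F s)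
    have h2 := hA s hs
    have h3 := hB s hs
    simp only [ha_def, hb_def] at h2 h3
    linear_combination (-(v s)) * h1 + Real.cosh (F s) * h2 - Real.sinh (F s) * h3
  have hw' : ∀ s ∈ I, w s = -A * Real.sinh (F s) + B * Real.cosh (F s) := by
    intro s hs
    have h1 := Real.cosh_sq_sub_sinh_sq (F s)
    have h2 := hA s hs
    have h3 := hB s hs
    simp only [ha_def, hb_def] at h2 h3
    linear_combination (-(w s)) * h1 - Real.sinh (F s) * h2 + Real.cosh (F s) * h3
  have hApos : A ≠ 0 := by nlinarith [sq_nonneg B]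
  rcases hApos.lt_or_gt with hAneg | hApos
  · refine ⟨Real.arsinh B, Or.inr fun s hs => ?_⟩
    have hc : Real.cosh (Real.arsinh B) = -A := by
      rw [Real.cosh_arsinh]
      rw [show (1 : ℝ) + B ^ 2 = (-A) ^ 2 by nlinarith]
      exact Real.sqrt_sq (by linarith)
    have hsn : Real.sinh (Real.arsinh B) = B := Real.sinh_arsinh B
    constructor
    · rw [hv' s hs, Real.cosh_add, hc, hsn]; ring
    · rw [hw' s hs, Real.sinh_add, hc, hsn]; ring
  · refine ⟨Real.arsinh (-B), Or.inl fun s hs => ?_⟩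
    have hc : Real.cosh (Real.arsinh (-B)) = A := by
      rw [Real.cosh_arsinh]
      rw [show (1 : ℝ) + (-B) ^ 2 = A ^ 2 by nlinarith]
      exact Real.sqrt_sq (by linarith)
    have hsn : Real.sinh (Real.arsinh (-B)) = -B := Real.sinh_arsinh (-B)
    constructor
    · rw [hv' s hs, Real.cosh_add, hc, hsn]; ring
    · rw [hw' s hs, Real.sinh_add, hc, hsn]; ring
end

section
/- Let τ : I → ℝ be continuous on an open interval I and let v, w : I → ℝ be differentiable functions satisfying v' + τ·w = 0, w' + τ·v = 0, and w(s)² - v(s)² = 1 for all s ∈ I. Then there exists a constant c such that either v(s) = sinh(∫τ ds + c) and w(s) = -cosh(∫τ ds + c) for all s, or v(s) = -sinh(∫τ ds + c) and w(s) = cosh(∫τ ds + c) for all s. -/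
lemma const_aux {I : Set ℝ} (hI : IsOpen I) (hc : Convex ℝ I) {f : ℝ → ℝ}
    (hf : ∀ x ∈ I, HasDerivAt f 0 x) : ∀ x ∈ I, ∀ y ∈ I, f x = f y := by
  intro x hx y hy
  apply hc.is_const_of_fderivWithin_eq_zero
    (fun z hz => ((hf z hz).differentiableAt).differentiableWithinAt) _ hx hy
  intro z hz
  rw [fderivWithin_of_isOpen hI hz]
  have := (hf z hz).hasFDerivAt.fderiv
  rw [this]
  ext
  simp

/-- ODE system (14): evolute-direction curves, normalization -v² + w² = 1. -/
theorem stmt_2 (I : Set ℝ) (hI : IsOpen I) (hI' : I.OrdConnected)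
    (τ v w F : ℝ → ℝ)
    (hτ : ContinuousOn τ I)
    (hF : ∀ s ∈ I, HasDerivAt F (τ s) s)
    (hv : ∀ s ∈ I, HasDerivAt v (-(τ s * w s)) s)
    (hw : ∀ s ∈ I, HasDerivAt w (-(τ s * v s)) s)
    (hnorm : ∀ s ∈ I, w s ^ 2 - v s ^ 2 = 1) :
    ∃ c : ℝ,
      (∀ s ∈ I, v s = Real.sinh (F s + c) ∧ w s = -Real.cosh (F s + c)) ∨
      (∀ s ∈ I, v s = -Real.sinh (F s + c) ∧ w s = Real.cosh (F s + c)) := by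
  rcases I.eq_empty_or_nonempty with rfl | ⟨s₀, hs₀⟩
  · exact ⟨0, Or.inl (by simp)⟩
  have hconv : Convex ℝ I := convex_iff_ordConnected.mpr hI'
  -- constants g, h
  set g : ℝ → ℝ := fun s => v s * Real.cosh (F s) + w s * Real.sinh (F s) with hg_def
  set h : ℝ → ℝ := fun s => v s * Real.sinh (F s) + w s * Real.cosh (F s) with hh_def
  have hg' : ∀ s ∈ I, HasDerivAt g 0 s := by
    intro s hs
    have := (((hv s hs).mul ((hF s hs).cosh)).add ((hw s hs).mul ((hF s hs).sinh)))
    convert this using 1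
    case e'_9 => ring
    all_goals rfl
  have hh' : ∀ s ∈ I, HasDerivAt h 0 s := by
    intro s hs
    have := (((hv s hs).mul ((hF s hs).sinh)).add ((hw s hs).mul ((hF s hs).cosh)))
    convert this using 1
    case e'_9 => ring
    all_goals rfl
  have hgc : ∀ s ∈ I, g s = g s₀ := fun s hs => const_aux hI hconv hg' s hs s₀ hs₀
  have hhc : ∀ s ∈ I, h s = h s₀ := fun s hs => const_aux hI hconv hh' s hs s₀ hs₀
  set a := g s₀ with ha_def
  set b := h s₀ with hb_def
  have hab : b ^ 2 - a ^ 2 = 1 := by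
    have := hnorm s₀ hs₀
    simp only [ha_def, hb_def, hg_def, hh_def]
    have hch := Real.cosh_sq_sub_sinh_sq (F s₀)
    nlinarith [this, hch]
  have hv_eq : ∀ s ∈ I, v s = a * Real.cosh (F s) - b * Real.sinh (F s) := by
    intro s hs
    have h1 := hgc s hs
    have h2 := hhc s hs
    simp only [hg_def, hh_def] at h1 h2
    have hch := Real.cosh_sq_sub_sinh_sq (F s)
    linear_combination Real.cosh (F s) * h1 - Real.sinh (F s) * h2 - v s * hch
  have hw_eq : ∀ s ∈ I, w s = b * Real.cosh (F s) - a * Real.sinh (F s) := by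
    intro s hs
    have h1 := hgc s hs
    have h2 := hhc s hs
    simp only [hg_def, hh_def] at h1 h2
    have hch := Real.cosh_sq_sub_sinh_sq (F s)
    linear_combination (-Real.sinh (F s)) * h1 + Real.cosh (F s) * h2 - w s * hch
  clear_value a b
  clear hgc hhc hg' hh' ha_def hb_def hg_def hh_def
  set c0 := Real.arsinh a with hc0
  have hsa : Real.sinh c0 = a := Real.sinh_arsinh a
  have hbcases : b = Real.cosh c0 ∨ b = -Real.cosh c0 := by
    have hfac : (b - Real.cosh c0) * (b + Real.cosh c0) = 0 := by
      have h2 := Real.cosh_sq' c0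
      linear_combination hab - h2 - (Real.sinh c0 + a) * hsa
    rcases mul_eq_zero.mp hfac with h | h
    · left; linarith
    · right; linarith
  rcases hbcases with hb | hb
  · refine ⟨-c0, Or.inr fun s hs => ?_⟩
    constructor
    · rw [hv_eq s hs, show F s + -c0 = F s - c0 by ring, Real.sinh_sub]
      linear_combination (-Real.cosh (F s)) * hsa - Real.sinh (F s) * hb
    · rw [hw_eq s hs, show F s + -c0 = F s - c0 by ring, Real.cosh_sub]
      linear_combination Real.sinh (F s) * hsa + Real.cosh (F s) * hb
  · refine ⟨c0, Or.inl fun s hs => ?_⟩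
    constructor
    · rw [hv_eq s hs, Real.sinh_add]
      linear_combination (-Real.cosh (F s)) * hsa - Real.sinh (F s) * hb
    · rw [hw_eq s hs, Real.cosh_add]
      linear_combination Real.sinh (F s) * hsa + Real.cosh (F s) * hb
end

section
/- Let κ, τ : I → ℝ be differentiable with κ and κ² - τ² nowhere zero, and define k̄ = κ cosh θ - τ sinh θ, τ̄ = -κ sinh θ + τ cosh θ for a constant θ with k̄ nowhere zero and k̄² - τ̄² nowhere zero. Then (κ²/(κ² - τ²)^{3/2}) · (τ/κ)' = (k̄²/(k̄² - τ̄²)^{3/2}) · (τ̄/k̄)' whenever κ² - τ² > 0 and k̄² - τ̄² > 0. -/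
/-- Corollary 5.2, eq. (92): invariance of the slant-helix function under
hyperbolic rotation. -/
theorem stmt_9 (I : Set ℝ) (hI : IsOpen I) (κ τ kb tb : ℝ → ℝ) (θ : ℝ)
    (hκd : ∀ s ∈ I, DifferentiableAt ℝ κ s)
    (hτd : ∀ s ∈ I, DifferentiableAt ℝ τ s)
    (hκ : ∀ s ∈ I, κ s ≠ 0)
    (hQ : ∀ s ∈ I, κ s ^ 2 - τ s ^ 2 ≠ 0)
    (hkb : ∀ s ∈ I, kb s = κ s * Real.cosh θ - τ s * Real.sinh θ)
    (htb : ∀ s ∈ I, tb s = -κ s * Real.sinh θ + τ s * Real.cosh θ)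
    (hkb0 : ∀ s ∈ I, kb s ≠ 0)
    (hQb : ∀ s ∈ I, kb s ^ 2 - tb s ^ 2 ≠ 0) :
    ∀ s ∈ I, κ s ^ 2 - τ s ^ 2 > 0 → kb s ^ 2 - tb s ^ 2 > 0 →
      κ s ^ 2 / (κ s ^ 2 - τ s ^ 2) ^ ((3 : ℝ) / 2) *
        deriv (fun t => τ t / κ t) s =
      kb s ^ 2 / (kb s ^ 2 - tb s ^ 2) ^ ((3 : ℝ) / 2) *
        deriv (fun t => tb t / kb t) s := by
  intro s hs hQp hQbp
  have hid : Real.cosh θ ^ 2 - Real.sinh θ ^ 2 = 1 := Real.cosh_sq_sub_sinh_sq θ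
  have hmem : I ∈ nhds s := hI.mem_nhds hs
  -- kb² - tb² = κ² - τ²
  have hQeq : kb s ^ 2 - tb s ^ 2 = κ s ^ 2 - τ s ^ 2 := by
    rw [hkb s hs, htb s hs]; nlinarith [hid]
  have hκs := hκ s hs
  have hkbs := hkb0 s hs
  have hkbdef := hkb s hs
  -- deriv of τ/κ
  have h1 : deriv (fun t => τ t / κ t) s
      = (deriv τ s * κ s - τ s * deriv κ s) / (κ s ^ 2) := by
    rw [deriv_fun_div (hτd s hs) (hκd s hs) hκs]
  -- tb/kb agrees near s with the explicit formula
  have heq : (fun t => tb t / kb t) =ᶠ[nhds s]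
      (fun t => (-κ t * Real.sinh θ + τ t * Real.cosh θ)
        / (κ t * Real.cosh θ - τ t * Real.sinh θ)) := by
    filter_upwards [hmem] with t ht
    rw [hkb t ht, htb t ht]
  have hnum : DifferentiableAt ℝ
      (fun t => -κ t * Real.sinh θ + τ t * Real.cosh θ) s := by
    exact (((hκd s hs).neg.mul_const _).add ((hτd s hs).mul_const _))
  have hden : DifferentiableAt ℝ
      (fun t => κ t * Real.cosh θ - τ t * Real.sinh θ) s := by
    exact (((hκd s hs).mul_const _).sub ((hτd s hs).mul_const _))
  have hden0 : κ s * Real.cosh θ - τ s * Real.sinh θ ≠ 0 := by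
    rw [← hkbdef]; exact hkbs
  have hnd : deriv (fun t => -κ t * Real.sinh θ + τ t * Real.cosh θ) s
      = -deriv κ s * Real.sinh θ + deriv τ s * Real.cosh θ := by
    rw [deriv_fun_add (((hκd s hs).fun_neg).mul_const _) ((hτd s hs).mul_const _),
      deriv_mul_const (hκd s hs).fun_neg, deriv_mul_const (hτd s hs), deriv.fun_neg]
  have hdd : deriv (fun t => κ t * Real.cosh θ - τ t * Real.sinh θ) s
      = deriv κ s * Real.cosh θ - deriv τ s * Real.sinh θ := by
    rw [deriv_fun_sub ((hκd s hs).mul_const _) ((hτd s hs).mul_const _),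
      deriv_mul_const (hκd s hs), deriv_mul_const (hτd s hs)]
  have h2 : deriv (fun t => tb t / kb t) s
      = (deriv τ s * κ s - τ s * deriv κ s) / (kb s ^ 2) := by
    rw [Filter.EventuallyEq.deriv_eq heq, deriv_fun_div hnum hden hden0, hnd, hdd,
      hkbdef]
    congr 1
    linear_combination (deriv τ s * κ s - τ s * deriv κ s) * hid
  rw [h1, h2, hQeq]
  have hκ2 : κ s ^ 2 ≠ 0 := pow_ne_zero 2 hκs
  have hkb2 : kb s ^ 2 ≠ 0 := pow_ne_zero 2 hkbs
  field_simp
end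

section
/- Let κ, τ : I → ℝ be differentiable with κ nowhere zero, θ a real constant, and define k̄ = κ cos θ + τ sin θ, τ̄ = -κ sin θ + τ cos θ, with k̄ nowhere zero. Then κ² + τ² = k̄² + τ̄² and (κ²/(κ² + τ²)^{3/2}) · (τ/κ)' = (k̄²/(k̄² + τ̄²)^{3/2}) · (τ̄/k̄)' on I. -/
/-- Corollary 5.2, eq. (94): invariance of the Euclidean-signature slant-helix
function under plane rotation. -/
theorem stmt_10 (I : Set ℝ) (hI : IsOpen I) (κ τ kb tb : ℝ → ℝ) (θ : ℝ)
    (hκd : ∀ s ∈ I, DifferentiableAt ℝ κ s)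
    (hτd : ∀ s ∈ I, DifferentiableAt ℝ τ s)
    (hκ : ∀ s ∈ I, κ s ≠ 0)
    (hkb : ∀ s ∈ I, kb s = κ s * Real.cos θ + τ s * Real.sin θ)
    (htb : ∀ s ∈ I, tb s = -κ s * Real.sin θ + τ s * Real.cos θ)
    (hkb0 : ∀ s ∈ I, kb s ≠ 0) :
    ∀ s ∈ I,
      κ s ^ 2 + τ s ^ 2 = kb s ^ 2 + tb s ^ 2 ∧
      κ s ^ 2 / (κ s ^ 2 + τ s ^ 2) ^ ((3 : ℝ) / 2) *
        deriv (fun t => τ t / κ t) s =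
      kb s ^ 2 / (kb s ^ 2 + tb s ^ 2) ^ ((3 : ℝ) / 2) *
        deriv (fun t => tb t / kb t) s := by
  intro s hs
  have pyth : Real.cos θ ^ 2 + Real.sin θ ^ 2 = 1 := Real.cos_sq_add_sin_sq θ
  have hkbs := hkb s hs
  have htbs := htb s hs
  have hκs := hκ s hs
  have hkb0s := hkb0 s hs
  have hsum : κ s ^ 2 + τ s ^ 2 = kb s ^ 2 + tb s ^ 2 := by
    rw [hkbs, htbs]
    linear_combination (κ s ^ 2 + τ s ^ 2) * pyth.symm
  refine ⟨hsum, ?_⟩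
  have hκ' : HasDerivAt κ (deriv κ s) s := (hκd s hs).hasDerivAt
  have hτ' : HasDerivAt τ (deriv τ s) s := (hτd s hs).hasDerivAt
  -- derivative of τ/κ
  have hq1 : deriv (fun t => τ t / κ t) s
      = (deriv τ s * κ s - τ s * deriv κ s) / κ s ^ 2 :=
    deriv_div (hτd s hs) (hκd s hs) hκs
  -- eventual equality on I
  have hmem : I ∈ nhds s := hI.mem_nhds hs
  have hEq : (fun t => tb t / kb t)
      =ᶠ[nhds s] fun t => (-κ t * Real.sin θ + τ t * Real.cos θ)
        / (κ t * Real.cos θ + τ t * Real.sin θ) := by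
    filter_upwards [hmem] with t ht
    rw [hkb t ht, htb t ht]
  have hnum : HasDerivAt (fun t => -κ t * Real.sin θ + τ t * Real.cos θ)
      (-deriv κ s * Real.sin θ + deriv τ s * Real.cos θ) s := by
    have := (hκ'.neg.mul_const (Real.sin θ)).add (hτ'.mul_const (Real.cos θ))
    exact this
  have hden : HasDerivAt (fun t => κ t * Real.cos θ + τ t * Real.sin θ)
      (deriv κ s * Real.cos θ + deriv τ s * Real.sin θ) s :=
    (hκ'.mul_const (Real.cos θ)).add (hτ'.mul_const (Real.sin θ))
  have hden0 : κ s * Real.cos θ + τ s * Real.sin θ ≠ 0 := by rw [← hkbs]; exact hkb0s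
  have hq2 : deriv (fun t => tb t / kb t) s
      = ((-deriv κ s * Real.sin θ + deriv τ s * Real.cos θ) * (κ s * Real.cos θ + τ s * Real.sin θ)
        - (-κ s * Real.sin θ + τ s * Real.cos θ) * (deriv κ s * Real.cos θ + deriv τ s * Real.sin θ))
        / (κ s * Real.cos θ + τ s * Real.sin θ) ^ 2 := by
    rw [hEq.deriv_eq]
    exact (hnum.div hden hden0).deriv
  have key : (-deriv κ s * Real.sin θ + deriv τ s * Real.cos θ) * (κ s * Real.cos θ + τ s * Real.sin θ)
      - (-κ s * Real.sin θ + τ s * Real.cos θ) * (deriv κ s * Real.cos θ + deriv τ s * Real.sin θ)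
      = deriv τ s * κ s - τ s * deriv κ s := by
    linear_combination (deriv τ s * κ s - τ s * deriv κ s) * pyth
  rw [hq1, hq2, ← hsum, hkbs, key]
  have hkb2 : (κ s * Real.cos θ + τ s * Real.sin θ) ^ 2 ≠ 0 := pow_ne_zero 2 hden0
  have hκ2 : κ s ^ 2 ≠ 0 := pow_ne_zero 2 hκs
  field_simp
end

section
/- Let κ, τ : I → ℝ be differentiable with τ nowhere zero and sinh(∫κ ds) nowhere zero, and define k̄ = τ sinh(∫κ ds), τ̄ = -τ cosh(∫κ ds), where ∫κ is a fixed antiderivative of κ. Then τ̄² - k̄² = τ² > 0 and κ = (k̄²/(τ̄² - k̄²)) · (τ̄/k̄)'. -/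
/-- Theorem 4.2(i): curvatures of the timelike Mannheim-direction curve of a
timelike curve, and recovery of κ. -/
theorem stmt_14 (I : Set ℝ) (hI : IsOpen I) (κ τ F kb tb : ℝ → ℝ)
    (hκd : ∀ s ∈ I, DifferentiableAt ℝ κ s)
    (hτd : ∀ s ∈ I, DifferentiableAt ℝ τ s)
    (hτ : ∀ s ∈ I, τ s ≠ 0)
    (hF : ∀ s ∈ I, HasDerivAt F (κ s) s)
    (hsinh : ∀ s ∈ I, Real.sinh (F s) ≠ 0)
    (hkb : ∀ s ∈ I, kb s = τ s * Real.sinh (F s))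
    (htb : ∀ s ∈ I, tb s = -(τ s * Real.cosh (F s))) :
    ∀ s ∈ I,
      tb s ^ 2 - kb s ^ 2 = τ s ^ 2 ∧ 0 < tb s ^ 2 - kb s ^ 2 ∧
      κ s = kb s ^ 2 / (tb s ^ 2 - kb s ^ 2) * deriv (fun t => tb t / kb t) s := by
  intro s hs
  have hτs := hτ s hs
  have hss := hsinh s hs
  have hid : tb s ^ 2 - kb s ^ 2 = τ s ^ 2 := by
    rw [hkb s hs, htb s hs]
    have h := Real.cosh_sq_sub_sinh_sq (F s)
    nlinarith [h]
  refine ⟨hid, ?_, ?_⟩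
  · rw [hid]; positivity
  · -- eventual equality
    have hev : (fun t => tb t / kb t) =ᶠ[nhds s]
        (fun t => -(Real.cosh (F t) / Real.sinh (F t))) := by
      filter_upwards [hI.mem_nhds hs] with t ht
      rw [hkb t ht, htb t ht, neg_div, mul_div_mul_left _ _ (hτ t ht)]
    have hder : HasDerivAt (fun t => -(Real.cosh (F t) / Real.sinh (F t)))
        (κ s / Real.sinh (F s) ^ 2) s := by
      have hFd := hF s hs
      have hc : HasDerivAt (fun t => Real.cosh (F t)) (Real.sinh (F s) * κ s) s :=
        hFd.cosh
      have hsn : HasDerivAt (fun t => Real.sinh (F t)) (Real.cosh (F s) * κ s) s :=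
        hFd.sinh
      have hdiv : HasDerivAt (fun t => -(Real.cosh (F t) / Real.sinh (F t))) _ s :=
        (hc.div hsn hss).neg
      convert hdiv using 1
      have h := Real.cosh_sq_sub_sinh_sq (F s)
      field_simp
      linear_combination (-(κ s)) * h
    rw [hev.deriv_eq, hder.deriv, hid, hkb s hs]
    field_simp
end

section
/- Let κ, τ : I → ℝ be differentiable with τ nowhere zero, and define k̄ = τ cosh(∫κ ds), τ̄ = τ sinh(∫κ ds), where ∫κ is a fixed antiderivative of κ. Then k̄² - τ̄² = τ² > 0 and κ = (k̄²/(k̄² - τ̄²)) · (τ̄/k̄)'. -/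
/-- Theorem 4.2(ii): curvatures of the spacelike type 2 Mannheim-direction curve
of a timelike curve. -/
theorem stmt_15 (I : Set ℝ) (hI : IsOpen I) (κ τ F kb tb : ℝ → ℝ)
    (hκd : ∀ s ∈ I, DifferentiableAt ℝ κ s)
    (hτd : ∀ s ∈ I, DifferentiableAt ℝ τ s)
    (hτ : ∀ s ∈ I, τ s ≠ 0)
    (hF : ∀ s ∈ I, HasDerivAt F (κ s) s)
    (hkb : ∀ s ∈ I, kb s = τ s * Real.cosh (F s))
    (htb : ∀ s ∈ I, tb s = τ s * Real.sinh (F s)) :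
    ∀ s ∈ I,
      kb s ^ 2 - tb s ^ 2 = τ s ^ 2 ∧ 0 < kb s ^ 2 - tb s ^ 2 ∧
      κ s = kb s ^ 2 / (kb s ^ 2 - tb s ^ 2) * deriv (fun t => tb t / kb t) s := by
  intro s hs
  have hch : ∀ x : ℝ, Real.cosh x ≠ 0 := fun x => ne_of_gt (Real.cosh_pos x)
  have hdiff : kb s ^ 2 - tb s ^ 2 = τ s ^ 2 := by
    rw [hkb s hs, htb s hs]
    have := Real.cosh_sq_sub_sinh_sq (F s)
    ring_nf
    nlinarith [this]
  refine ⟨hdiff, by rw [hdiff, ← sq_abs]; exact pow_pos (abs_pos.mpr (hτ s hs)) 2, ?_⟩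
  -- derivative of tb/kb
  have heq : (fun t => tb t / kb t) =ᶠ[nhds s] fun t => Real.sinh (F t) / Real.cosh (F t) := by
    filter_upwards [hI.mem_nhds hs] with t ht
    rw [hkb t ht, htb t ht, mul_div_mul_left _ _ (hτ t ht)]
  have hd : HasDerivAt (fun t => Real.sinh (F t) / Real.cosh (F t))
      ((Real.cosh (F s) * κ s * Real.cosh (F s) -
        Real.sinh (F s) * (Real.sinh (F s) * κ s)) / Real.cosh (F s) ^ 2) s :=
    ((hF s hs).sinh).div ((hF s hs).cosh) (hch (F s))
  rw [heq.deriv_eq, hd.deriv, hdiff, hkb s hs]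
  have h1 := Real.cosh_sq_sub_sinh_sq (F s)
  have hτs := hτ s hs
  have h2 : Real.sinh (F s) ^ 2 = Real.cosh (F s) ^ 2 - 1 := by linarith
  field_simp
  linear_combination (-(κ s)) * h1
end

section
/- Let κ, τ : I → ℝ be differentiable with κ nowhere zero and cos(∫τ ds) nowhere zero, and set k̄ = κ cos(∫τ ds), τ̄ = -κ sin(∫τ ds). If τ/κ is constant on I, then the function (k̄²/(k̄² + τ̄²)^{3/2}) · (τ̄/k̄)' is constant on I; conversely, if that function is constant, then τ/κ is constant. -/
/-- Sign of a continuous nonvanishing function on an order-connected set is constant. -/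
lemma sign_const_aux {I : Set ℝ} (hI' : I.OrdConnected) {κ : ℝ → ℝ}
    (hc : ∀ s ∈ I, ContinuousAt κ s) (hκ : ∀ s ∈ I, κ s ≠ 0)
    {a b : ℝ} (ha : a ∈ I) (hb : b ∈ I) (hpa : 0 < κ a) : 0 < κ b := by
  by_contra h
  push_neg at h
  have hb0 : κ b ≤ 0 := h
  rcases le_total a b with hab | hab
  · have hsub : Set.Icc a b ⊆ I := hI'.out ha hb
    have hcont : ContinuousOn κ (Set.Icc a b) :=
      fun x hx => (hc x (hsub hx)).continuousWithinAt
    have h0 : (0 : ℝ) ∈ Set.Icc (κ b) (κ a) := ⟨hb0, hpa.le⟩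
    obtain ⟨x, hx, hx0⟩ := intermediate_value_Icc' hab hcont h0
    exact hκ x (hsub hx) hx0
  · have hsub : Set.Icc b a ⊆ I := hI'.out hb ha
    have hcont : ContinuousOn κ (Set.Icc b a) :=
      fun x hx => (hc x (hsub hx)).continuousWithinAt
    have h0 : (0 : ℝ) ∈ Set.Icc (κ b) (κ a) := ⟨hb0, hpa.le⟩
    obtain ⟨x, hx, hx0⟩ := intermediate_value_Icc hab hcont h0
    exact hκ x (hsub hx) hx0

/-- Theorem 3.3 (analytic content): α is a general helix iff its evolute-direction
curve is a slant helix. -/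
theorem stmt_17 (I : Set ℝ) (hI : IsOpen I) (hI' : I.OrdConnected)
    (κ τ F kb tb : ℝ → ℝ)
    (hκd : ∀ s ∈ I, DifferentiableAt ℝ κ s)
    (hτd : ∀ s ∈ I, DifferentiableAt ℝ τ s)
    (hκ : ∀ s ∈ I, κ s ≠ 0)
    (hF : ∀ s ∈ I, HasDerivAt F (τ s) s)
    (hcos : ∀ s ∈ I, Real.cos (F s) ≠ 0)
    (hkb : ∀ s ∈ I, kb s = κ s * Real.cos (F s))
    (htb : ∀ s ∈ I, tb s = -(κ s * Real.sin (F s))) :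
    (∃ c : ℝ, ∀ s ∈ I, τ s / κ s = c) ↔
    (∃ c : ℝ, ∀ s ∈ I,
      kb s ^ 2 / (kb s ^ 2 + tb s ^ 2) ^ ((3 : ℝ) / 2) *
        deriv (fun t => tb t / kb t) s = c) := by
  rcases Set.eq_empty_or_nonempty I with hIe | ⟨s₀, hs₀⟩
  · subst hIe
    simp
  -- Key pointwise identity: the slant-helix invariant equals -(τ s / |κ s|).
  have key : ∀ s ∈ I,
      kb s ^ 2 / (kb s ^ 2 + tb s ^ 2) ^ ((3 : ℝ) / 2) *
        deriv (fun t => tb t / kb t) s = -(τ s / |κ s|) := by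
    intro s hs
    have hκs := hκ s hs
    have hcs := hcos s hs
    -- tb/kb = -tan ∘ F near s
    have heq : (fun t => tb t / kb t) =ᶠ[nhds s] (fun t => -Real.tan (F t)) := by
      filter_upwards [hI.mem_nhds hs] with t ht
      rw [hkb t ht, htb t ht, Real.tan_eq_sin_div_cos, neg_div,
        mul_div_mul_left _ _ (hκ t ht)]
    have htan : HasDerivAt (fun t => -Real.tan (F t))
        (-(1 / Real.cos (F s) ^ 2 * τ s)) s :=
      ((Real.hasDerivAt_tan hcs).comp s (hF s hs)).neg
    have hderiv : deriv (fun t => tb t / kb t) s = -(1 / Real.cos (F s) ^ 2 * τ s) := by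
      rw [heq.deriv_eq, htan.deriv]
    rw [hderiv, hkb s hs, htb s hs]
    have hsum : (κ s * Real.cos (F s)) ^ 2 + (-(κ s * Real.sin (F s))) ^ 2
        = κ s ^ 2 := by
      have := Real.sin_sq_add_cos_sq (F s)
      ring_nf
      nlinarith [this]
    rw [hsum]
    have hpow : (κ s ^ 2 : ℝ) ^ ((3 : ℝ) / 2) = |κ s| ^ 3 := by
      rw [← sq_abs, ← Real.rpow_natCast |κ s| 2, ← Real.rpow_mul (abs_nonneg _),
        ← Real.rpow_natCast |κ s| 3]
      norm_num
    rw [hpow]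
    have habs : |κ s| ≠ 0 := abs_ne_zero.mpr hκs
    have h3 : |κ s| ^ 3 = κ s ^ 2 * |κ s| := by
      rw [pow_succ, sq_abs]
    rw [h3]
    field_simp
  -- sign of κ is constant on I
  have hcont : ∀ s ∈ I, ContinuousAt κ s := fun s hs => (hκd s hs).continuousAt
  set ε : ℝ := if 0 < κ s₀ then 1 else -1 with hε
  have hεabs : ∀ s ∈ I, |κ s| = ε * κ s := by
    intro s hs
    by_cases h0 : 0 < κ s₀
    · have : 0 < κ s := sign_const_aux hI' hcont hκ hs₀ hs h0
      simp [hε, h0, abs_of_pos this]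
    · have hneg : κ s₀ < 0 := lt_of_le_of_ne (not_lt.mp h0) (hκ s₀ hs₀)
      have : 0 < κ s → False := by
        intro hp
        have := sign_const_aux hI' hcont hκ hs hs₀ hp
        linarith
      have hsneg : κ s < 0 := lt_of_le_of_ne (not_lt.mp fun hp => this hp) (hκ s hs)
      simp [hε, h0, abs_of_neg hsneg]
  have hεsq : ε * ε = 1 := by
    by_cases h0 : 0 < κ s₀ <;> simp [hε, h0]
  constructor
  · rintro ⟨c, hc⟩
    refine ⟨-(c * ε), fun s hs => ?_⟩
    rw [key s hs, hεabs s hs]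
    have hτs : τ s = c * κ s := by
      have h := hc s hs
      rw [div_eq_iff (hκ s hs)] at h
      exact h
    rw [hτs]
    have hκs := hκ s hs
    have hε0 : ε ≠ 0 := by by_cases h0 : 0 < κ s₀ <;> simp [hε, h0]
    field_simp
    linear_combination c * hεsq
  · rintro ⟨c, hc⟩
    refine ⟨-(c * ε), fun s hs => ?_⟩
    have h1 := hc s hs
    rw [key s hs, hεabs s hs] at h1
    have hκs := hκ s hs
    have hε0 : ε ≠ 0 := by by_cases h0 : 0 < κ s₀ <;> simp [hε, h0]
    field_simp at h1 ⊢
    linear_combination -h1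
end

section
/- Let κ, τ : I → ℝ be differentiable with κ nowhere zero and cos(∫τ ds) nowhere zero, and set k̄ = κ cos(∫τ ds), τ̄ = -κ sin(∫τ ds). Then τ ≡ 0 on I if and only if τ̄/k̄ is constant on I. -/
/-- Theorem 3.4 (analytic content): α is a plane curve iff its evolute-direction
curve is a general helix. -/
theorem stmt_18 (I : Set ℝ) (hI : IsOpen I) (hI' : I.OrdConnected)
    (κ τ F kb tb : ℝ → ℝ)
    (hκd : ∀ s ∈ I, DifferentiableAt ℝ κ s)
    (hτd : ∀ s ∈ I, DifferentiableAt ℝ τ s)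
    (hκ : ∀ s ∈ I, κ s ≠ 0)
    (hF : ∀ s ∈ I, HasDerivAt F (τ s) s)
    (hcos : ∀ s ∈ I, Real.cos (F s) ≠ 0)
    (hkb : ∀ s ∈ I, kb s = κ s * Real.cos (F s))
    (htb : ∀ s ∈ I, tb s = -(κ s * Real.sin (F s))) :
    (∀ s ∈ I, τ s = 0) ↔ (∃ c : ℝ, ∀ s ∈ I, tb s / kb s = c) := by
  have hconv : Convex ℝ I := convex_iff_ordConnected.mpr hI'
  constructor
  · intro hτ0
    rcases Set.eq_empty_or_nonempty I with h | ⟨s₀, hs₀⟩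
    · exact ⟨0, fun s hs => by simp [h] at hs⟩
    · refine ⟨tb s₀ / kb s₀, fun s hs => ?_⟩
      -- F is constant on I
      have hF0 : ∀ x ∈ I, HasFDerivWithinAt F (0 : ℝ →L[ℝ] ℝ) I x := by
        intro x hx
        have := (hF x hx)
        rw [hτ0 x hx] at this
        have h2 := this.hasFDerivAt
        have hz : (ContinuousLinearMap.smulRight (1 : ℝ →L[ℝ] ℝ) (0:ℝ)) = 0 := by
          ext; simp
        rw [← hz]
        exact h2.hasFDerivWithinAt
      have hdiff : DifferentiableOn ℝ F I := fun x hx =>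
        (hF0 x hx).differentiableWithinAt
      have hfd : ∀ x ∈ I, fderivWithin ℝ F I x = 0 := by
        intro x hx
        exact (hF0 x hx).fderivWithin (hI.uniqueDiffOn x hx)
      have hFconst : F s = F s₀ :=
        hconv.is_const_of_fderivWithin_eq_zero hdiff hfd hs hs₀
      have key : ∀ x ∈ I, tb x / kb x = -(Real.tan (F x)) := by
        intro x hx
        rw [htb x hx, hkb x hx, Real.tan_eq_sin_div_cos, neg_div]
        congr 1
        rw [mul_div_mul_left _ _ (hκ x hx)]
      rw [key s hs, key s₀ hs₀, hFconst]
  · rintro ⟨c, hc⟩ s hs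
    -- tan (F x) = -c on I
    have htan : ∀ x ∈ I, Real.tan (F x) = -c := by
      intro x hx
      have h1 := hc x hx
      rw [htb x hx, hkb x hx] at h1
      have hκx := hκ x hx
      have hcx := hcos x hx
      have hsin : Real.sin (F x) = -c * Real.cos (F x) := by
        field_simp at h1
        have h2 : κ x * Real.sin (F x) = κ x * (-c * Real.cos (F x)) := by
          linear_combination (-κ x) * h1
        exact mul_left_cancel₀ hκx h2
      rw [Real.tan_eq_sin_div_cos, hsin]
      field_simp
    -- derivative of tan ∘ F at s
    have hd1 : HasDerivAt (fun x => Real.tan (F x)) (1 / Real.cos (F s) ^ 2 * τ s) s :=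
      (Real.hasDerivAt_tan (hcos s hs)).comp s (hF s hs)
    have hd2 : HasDerivAt (fun x => Real.tan (F x)) 0 s := by
      have hev : (fun x => Real.tan (F x)) =ᶠ[nhds s] fun _ => -c :=
        Filter.eventuallyEq_of_mem (hI.mem_nhds hs) htan
      exact (hasDerivAt_const s (-c)).congr_of_eventuallyEq hev
    have := hd1.unique hd2
    have hcs := hcos s hs
    have h2 : Real.cos (F s) ^ 2 ≠ 0 := pow_ne_zero _ hcs
    field_simp at this
    simpa using this
end
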